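/- In the Jordanian quantum algebra U_h(sl(2)) with generators X, Y, H satisfying [X,Y]=H, [H,X]=2sinh(hX)/h, [H,Y]=-Y cosh(hX)-cosh(hX) Y, the elements Z_+ = (2/h) tanh(hX/2), Z_- = cosh(hX/2) Y cosh(hX/2), and H satisfy the undeformed sl(2) relations [H, Z_±] = ±2 Z_± and [Z_+, Z_-] = H. -/

import Mathlib

open NormedSpace

/-- `sinh` of an element of a complex Banach algebra, via the exponential series. -/
noncomputable def sinhA {A : Type*} [NormedRing A] [NormedAlgebra ℂ A] [CompleteSpace A]
    (a : A) : A := (2 : ℂ)⁻¹ • (exp a - exp (-a))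

/-- `cosh` of an element of a complex Banach algebra. -/
noncomputable def coshA {A : Type*} [NormedRing A] [NormedAlgebra ℂ A] [CompleteSpace A]
    (a : A) : A := (2 : ℂ)⁻¹ • (exp a + exp (-a))

/-- `tanh` of an element of a complex Banach algebra (meaningful when `coshA a` is a unit). -/
noncomputable def tanhA {A : Type*} [NormedRing A] [NormedAlgebra ℂ A] [CompleteSpace A]
    (a : A) : A := Ring.inverse (coshA a) * sinhA a

noncomputable local instance instNormedAlgebraRatOfComplex {A : Type*} [NormedRing A]
    [NormedAlgebra ℂ A] : NormedAlgebra ℚ A :=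
  NormedAlgebra.restrictScalars ℚ ℂ A

section Helpers

variable {A : Type*} [NormedRing A] [NormedAlgebra ℂ A] [CompleteSpace A]

private lemma expinv (X : A) (t : ℂ) : exp (t • X) * exp (-(t • X)) = 1 := by
  rw [← exp_add_of_commute ((Commute.refl (t • X)).neg_right)]
  simp [exp_zero]

private lemma conjDeriv (X B : A) (t : ℂ) :
    HasDerivAt (fun t : ℂ => exp (t • X) * B * exp (-(t • X)))
      (exp (t • X) * (X * B - B * X) * exp (-(t • X))) t := by
  have h1 := hasDerivAt_exp_smul_const (𝕂 := ℂ) X t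
  have h2 := hasDerivAt_exp_smul_const' (𝕂 := ℂ) (-X) t
  have h3 := (h1.mul_const B).mul h2
  simp only [smul_neg] at h2 h3
  refine h3.congr_deriv ?_
  noncomm_ring

private lemma constOf {f : ℂ → A} (hf : ∀ t, HasDerivAt f 0 t) (t : ℂ) : f t = f 0 := by
  have hz : (ContinuousLinearMap.smulRight (1 : ℂ →L[ℂ] ℂ) (0 : A)) = 0 := by
    ext; simp
  apply is_const_of_fderiv_eq_zero (𝕜 := ℂ) (fun s => (hf s).differentiableAt)
  intro s
  have h2 : HasFDerivAt f (0 : ℂ →L[ℂ] A) s := hz ▸ (hf s).hasFDerivAt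
  exact h2.fderiv

private lemma conj_eq (X B C D : A) (h1 : X * B - B * X = C) (h2 : X * C - C * X = D)
    (h3 : X * D = D * X) (t : ℂ) :
    exp (t • X) * B * exp (-(t • X)) = B + t • C + (t ^ 2 / 2) • D := by
  have cXD : Commute X D := h3
  have hD : ∀ s : ℂ, exp (s • X) * D * exp (-(s • X)) = D := by
    intro s
    have cED : Commute (exp (s • X)) D := ((cXD.smul_left s).exp_left)
    rw [cED.eq, mul_assoc, expinv, mul_one]
  have hC : ∀ s : ℂ, exp (s • X) * C * exp (-(s • X)) = C + s • D := by
    have key : ∀ s : ℂ, HasDerivAt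
        (fun s : ℂ => exp (s • X) * C * exp (-(s • X)) - s • D) 0 s := by
      intro s
      have d1 := (conjDeriv X C s).sub ((hasDerivAt_id' (x := s)).smul_const D)
      rw [h2] at d1
      refine d1.congr_deriv ?_
      rw [hD s]
      module
    intro s
    have h0 := constOf key s
    simp only [zero_smul, exp_zero, one_mul, mul_one, neg_zero, sub_zero] at h0
    rw [sub_eq_iff_eq_add] at h0
    exact h0
  have key : ∀ s : ℂ, HasDerivAt
      (fun s : ℂ => exp (s • X) * B * exp (-(s • X)) - s • C - (s ^ 2 / 2) • D) 0 s := by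
    intro s
    have d1 := ((conjDeriv X B s).sub ((hasDerivAt_id' (x := s)).smul_const C)).sub
      (((hasDerivAt_pow 2 s).div_const 2).smul_const D)
    rw [h1] at d1
    refine d1.congr_deriv ?_
    rw [hC s]
    module
  have h0 := constOf key t
  simp only [zero_smul, exp_zero, one_mul, mul_one, neg_zero, sub_zero, ne_eq,
    OfNat.ofNat_ne_zero, not_false_eq_true, zero_pow, zero_div] at h0
  rw [sub_eq_iff_eq_add, sub_eq_iff_eq_add] at h0
  rw [h0]; abel

end Helpers

/-- In `U_h(sl(2))`, the elements `Z₊ = (2/h) tanh(hX/2)`, `Z₋ = cosh(hX/2) Y cosh(hX/2)`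
and `H` satisfy the undeformed `sl(2)` relations. -/
theorem jordanian_nonlinear_sl2 {A : Type*} [NormedRing A] [NormedAlgebra ℂ A]
    [CompleteSpace A] (h : ℂ) (hh : h ≠ 0) (X Y H : A)
    (rel1 : X * Y - Y * X = H)
    (rel2 : H * X - X * H = (2 / h) • sinhA (h • X))
    (rel3 : H * Y - Y * H = -(Y * coshA (h • X) + coshA (h • X) * Y))
    (hcosh : IsUnit (coshA ((h / 2) • X))) :
    H * ((2 / h) • tanhA ((h / 2) • X)) - ((2 / h) • tanhA ((h / 2) • X)) * H
        = (2 : ℂ) • ((2 / h) • tanhA ((h / 2) • X)) ∧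
    H * (coshA ((h / 2) • X) * Y * coshA ((h / 2) • X))
        - (coshA ((h / 2) • X) * Y * coshA ((h / 2) • X)) * H
        = -((2 : ℂ) • (coshA ((h / 2) • X) * Y * coshA ((h / 2) • X))) ∧
    ((2 / h) • tanhA ((h / 2) • X)) * (coshA ((h / 2) • X) * Y * coshA ((h / 2) • X))
        - (coshA ((h / 2) • X) * Y * coshA ((h / 2) • X)) * ((2 / h) • tanhA ((h / 2) • X))
        = H := by
  simp only [tanhA, coshA, sinhA] at hcosh ⊢
  set u := exp ((h / 2) • X) with hu
  set v := exp (-((h / 2) • X)) with hv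
  set S := sinhA (h • X) with hSd
  set K := coshA (h • X) with hKd
  set c := (2 : ℂ)⁻¹ • (u + v) with hc
  set s := (2 : ℂ)⁻¹ • (u - v) with hs
  set ci := Ring.inverse c with hcid
  -- basic exponential facts
  have huv : u * v = 1 := by rw [hu, hv]; exact expinv X (h / 2)
  have hvu : v * u = 1 := by
    rw [hu, hv]
    have h1 := expinv X (-(h / 2))
    rwa [neg_smul, neg_neg] at h1
  have huv1 : ∀ w : A, u * (v * w) = w := fun w => by rw [← mul_assoc, huv, one_mul]
  have hvu1 : ∀ w : A, v * (u * w) = w := fun w => by rw [← mul_assoc, hvu, one_mul]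
  have haX : (h : ℂ) • X = (h / 2) • X + (h / 2) • X := by
    rw [← add_smul, show h / 2 + h / 2 = h by ring]
  have e1 : exp (h • X) = u * u := by
    rw [haX, exp_add_of_commute (Commute.refl _), hu]
  have e2 : exp (-(h • X)) = v * v := by
    rw [haX, neg_add, exp_add_of_commute (Commute.refl _), hv]
  have Sdef : S = (2 : ℂ)⁻¹ • (u * u - v * v) := by
    rw [hSd]; simp only [sinhA]; rw [e1, e2]
  have Kc0 : K = (2 : ℂ)⁻¹ • (u * u + v * v) := by
    rw [hKd]; simp only [coshA]; rw [e1, e2]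
  -- conjugation identities
  have cXu : Commute X u := by
    rw [hu]; exact ((Commute.refl X).smul_right (h / 2)).exp_right
  have cXv : Commute X v := by
    rw [hv]; exact (((Commute.refl X).smul_right (h / 2)).neg_right).exp_right
  have cS : Commute X S := by
    rw [Sdef]; exact ((cXu.mul_right cXu).sub_right (cXv.mul_right cXv)).smul_right _
  have relH : X * H - H * X = -((2 / h) • S) := by rw [← rel2]; abel
  have hD3 : X * (-((2 / h) • S)) = (-((2 / h) • S)) * X :=
    ((cS.smul_right (2 / h)).neg_right).eq
  have relH2 : X * (-((2 / h) • S)) - (-((2 / h) • S)) * X = 0 := by rw [hD3, sub_self]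
  have conjY := fun t : ℂ => conj_eq X Y H (-((2 / h) • S)) rel1 relH hD3 t
  have conjH := fun t : ℂ => conj_eq X H (-((2 / h) • S)) 0 relH relH2 (by simp) t
  have sc1 : (h / 2) • ((2 / h) • S) = S := by
    rw [smul_smul, show h / 2 * (2 / h) = 1 by field_simp, one_smul]
  have sc2 : ((h / 2) ^ 2 / 2) • ((2 / h) • S) = (h / 4) • S := by
    rw [smul_smul, show (h / 2) ^ 2 / 2 * (2 / h) = h / 4 by field_simp; ring]
  have cH1 : u * H * v = H + -S := by
    have hh1 := conjH (h / 2)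
    simp only [smul_neg, sc1, smul_zero, add_zero] at hh1
    rw [← hu, ← hv] at hh1
    exact hh1
  have cH2 : v * H * u = H + S := by
    have hh1 := conjH (-(h / 2))
    simp only [neg_smul, neg_neg, smul_neg, sc1, smul_zero, add_zero] at hh1
    rw [← hu, ← hv] at hh1
    exact hh1
  have P1 : H * u = u * H + S * u := by
    have h1 : u * H * v * u = (H + -S) * u := by rw [cH1]
    rw [mul_assoc (u * H) v u, hvu, mul_one, add_mul, neg_mul] at h1
    rw [h1]; abel
  have P2 : H * v = v * H - S * v := by
    have h1 : v * H * u * v = (H + S) * v := by rw [cH2]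
    rw [mul_assoc (v * H) u v, huv, mul_one, add_mul] at h1
    rw [h1]; abel
  have cY1 : u * Y * v = Y + (h / 2) • H + -((h / 4) • S) := by
    have hh1 := conjY (h / 2)
    simp only [smul_neg, sc2] at hh1
    rw [← hu, ← hv] at hh1
    exact hh1
  have cY2 : v * Y * u = Y + -((h / 2) • H) + -((h / 4) • S) := by
    have hh1 := conjY (-(h / 2))
    simp only [neg_smul, neg_neg, smul_neg, neg_sq, sc2] at hh1
    rw [← hu, ← hv] at hh1
    exact hh1
  have P3' : u * (Y * v) = v * (Y * u) + h • H := by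
    have hP : u * Y * v - v * Y * u = h • H := by rw [cY1, cY2]; module
    rw [sub_eq_iff_eq_add] at hP
    rw [← mul_assoc, hP, mul_assoc]; abel
  -- algebra of c, s, S, K
  have hic : ci * c = 1 := by rw [hcid]; exact Ring.inverse_mul_cancel c hcosh
  have hci : c * ci = 1 := by rw [hcid]; exact Ring.mul_inverse_cancel c hcosh
  have csc : c * s = s * c := by
    rw [hc, hs]
    simp only [smul_add, smul_sub, add_mul, mul_add, sub_mul, mul_sub, smul_mul_assoc,
      mul_smul_comm, smul_smul, mul_assoc, mul_one, one_mul, huv, hvu, huv1, hvu1]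
    module
  have Scs : S = (2 : ℂ) • (s * c) := by
    rw [Sdef, hc, hs]
    simp only [smul_add, smul_sub, add_mul, mul_add, sub_mul, mul_sub, smul_mul_assoc,
      mul_smul_comm, smul_smul, mul_assoc, mul_one, one_mul, huv, hvu, huv1, hvu1]
    module
  have CS1 : c * c = 1 + s * s := by
    rw [hc, hs]
    simp only [smul_add, smul_sub, add_mul, mul_add, sub_mul, mul_sub, smul_mul_assoc,
      mul_smul_comm, smul_smul, mul_assoc, mul_one, one_mul, huv, hvu, huv1, hvu1]
    module
  have Sc : S * c = c * S := by
    rw [Sdef, hc]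
    simp only [smul_add, smul_sub, add_mul, mul_add, sub_mul, mul_sub, smul_mul_assoc,
      mul_smul_comm, smul_smul, mul_assoc, mul_one, one_mul, huv, hvu, huv1, hvu1]
    module
  have SsV : S * s = (2 : ℂ) • (c * (c * c)) - (2 : ℂ) • c := by
    rw [Sdef, hc, hs]
    simp only [smul_add, smul_sub, add_mul, mul_add, sub_mul, mul_sub, smul_mul_assoc,
      mul_smul_comm, smul_smul, mul_assoc, mul_one, one_mul, huv, hvu, huv1, hvu1]
    module
  have Kc : K = (2 : ℂ) • (c * c) - 1 := by
    rw [Kc0, hc]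
    simp only [smul_add, smul_sub, add_mul, mul_add, sub_mul, mul_sub, smul_mul_assoc,
      mul_smul_comm, smul_smul, mul_assoc, mul_one, one_mul, huv, hvu, huv1, hvu1]
    module
  have HC : H * c = c * H + S * s := by
    rw [hc, hs]
    simp only [smul_add, smul_sub, mul_smul_comm, smul_mul_assoc, mul_add, mul_sub,
      add_mul, sub_mul]
    rw [P1, P2]
    module
  have HS : H * s = s * H + S * c := by
    rw [hc, hs]
    simp only [smul_add, smul_sub, mul_smul_comm, smul_mul_assoc, mul_add, mul_sub,
      add_mul, sub_mul]
    rw [P1, P2]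
    module
  -- inverse commutation
  have cinv : ∀ a : A, c * a = a * c → ci * a = a * ci := by
    intro a hca
    calc ci * a = ci * a * (c * ci) := by rw [hci, mul_one]
      _ = ci * (a * c) * ci := by noncomm_ring
      _ = ci * (c * a) * ci := by rw [hca]
      _ = (ci * c) * (a * ci) := by noncomm_ring
      _ = a * ci := by rw [hic, one_mul]
  have sci : s * ci = ci * s := (cinv s csc).symm
  have Sci2 : S * ci = ci * S := (cinv S Sc.symm).symm
  -- Goal 1 computation
  have hH1 : H = c * (H * ci) + S * (s * ci) := by
    calc H = H * c * ci := by rw [mul_assoc, hci, mul_one]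
      _ = (c * H + S * s) * ci := by rw [HC]
      _ = c * (H * ci) + S * (s * ci) := by noncomm_ring
  have hHci : H * ci = ci * H - ci * (S * (s * ci)) := by
    have h1 : ci * H = H * ci + ci * (S * (s * ci)) := by
      calc ci * H = ci * (c * (H * ci) + S * (s * ci)) := by rw [← hH1]
        _ = (ci * c) * (H * ci) + ci * (S * (s * ci)) := by noncomm_ring
        _ = H * ci + ci * (S * (s * ci)) := by rw [hic, one_mul]
    rw [h1]; abel
  have t2 : s * (ci * s) = ci * (s * s) := by rw [← mul_assoc, sci, mul_assoc]
  have t3 : S * (ci * (s * s)) = ci * (S * (s * s)) := by rw [← mul_assoc, Sci2, mul_assoc]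
  have hss : s * s = c * c - 1 := by rw [CS1]; abel
  have t4 : S * (s * s) = c * (c * S) - S := by
    rw [hss, mul_sub, mul_one]
    congr 1
    rw [← mul_assoc, Sc, mul_assoc, Sc]
  have t5 : ci * (ci * (c * (c * S))) = S := by
    rw [show ci * (c * (c * S)) = c * S from by rw [← mul_assoc, hic, one_mul],
      ← mul_assoc, hic, one_mul]
  have t6 : ci * (ci * S) = (2 : ℂ) • (ci * s) := by
    rw [Scs]
    simp only [mul_smul_comm]
    rw [← csc, show ci * (c * s) = s from by rw [← mul_assoc, hic, one_mul]]
  have key2 : ci * (S * (s * (ci * s))) = S - (2 : ℂ) • (ci * s) := by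
    rw [t2, t3, t4, mul_sub, mul_sub, t5, t6]
  have E1 : H * (ci * s) - (ci * s) * H = (2 : ℂ) • (ci * s) := by
    have hmain : H * (ci * s) = (ci * s) * H + ci * (S * c) - ci * (S * (s * (ci * s))) := by
      calc H * (ci * s) = (H * ci) * s := by rw [mul_assoc]
        _ = (ci * H - ci * (S * (s * ci))) * s := by rw [hHci]
        _ = ci * (H * s) - ci * (S * (s * (ci * s))) := by noncomm_ring
        _ = ci * (s * H + S * c) - ci * (S * (s * (ci * s))) := by rw [HS]
        _ = (ci * s) * H + ci * (S * c) - ci * (S * (s * (ci * s))) := by noncomm_ring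
    rw [hmain, show ci * (S * c) = S from by rw [Sc, ← mul_assoc, hic, one_mul], key2]
    abel
  -- Goal 2 computation
  have hHY : H * Y = Y * H - Y * K - K * Y := by
    have h' := rel3
    rw [sub_eq_iff_eq_add] at h'
    rw [h']; abel
  have R2 : ∀ w : A, H * (Y * w) = Y * (H * w) - Y * (K * w) - K * (Y * w) := fun w => by
    rw [← mul_assoc, hHY]; simp only [sub_mul, mul_assoc]
  have R1 : ∀ w : A, H * (c * w) = c * (H * w) + S * (s * w) := fun w => by
    rw [← mul_assoc, HC]; simp only [add_mul, mul_assoc]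
  have Kc' : ∀ w : A, K * w = (2 : ℂ) • (c * (c * w)) - w := fun w => by
    rw [Kc]; simp only [sub_mul, smul_mul_assoc, mul_assoc, one_mul]
  have SsV' : ∀ w : A, S * (s * w) = (2 : ℂ) • (c * (c * (c * w))) - (2 : ℂ) • (c * w) :=
    fun w => by
      rw [← mul_assoc, SsV]
      simp only [sub_mul, smul_mul_assoc, mul_assoc]
  have E2 : H * (c * Y * c) - (c * Y * c) * H = -((2 : ℂ) • (c * Y * c)) := by
    simp only [mul_assoc]
    simp only [R1, R2, HC, Kc', SsV', SsV, mul_add, mul_sub, add_mul, sub_mul, smul_add,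
      smul_sub, mul_smul_comm, smul_mul_assoc, smul_smul, mul_assoc, mul_one, one_mul,
      smul_neg, neg_neg]
    module
  -- Goal 3 computation
  have hicw : ∀ w : A, ci * (c * w) = w := fun w => by rw [← mul_assoc, hic, one_mul]
  have hciw : ∀ w : A, c * (ci * w) = w := fun w => by rw [← mul_assoc, hci, one_mul]
  have csc' : ∀ w : A, s * (c * w) = c * (s * w) := fun w => by
    rw [← mul_assoc, ← csc, mul_assoc]
  have hH2 : H = (2 / h) • ((h / 2) • H) := by
    rw [smul_smul, show 2 / h * (h / 2) = 1 by field_simp, one_smul]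
  have E3 : ((2 / h) • (ci * s)) * (c * Y * c) - (c * Y * c) * ((2 / h) • (ci * s)) = H := by
    conv_rhs => rw [hH2]
    simp only [smul_mul_assoc, mul_smul_comm, mul_assoc]
    simp only [csc', hicw, hciw]
    rw [hc, hs]
    simp only [smul_add, smul_sub, add_mul, mul_add, sub_mul, mul_sub, smul_mul_assoc,
      mul_smul_comm, smul_smul, mul_assoc, mul_one, one_mul, huv, hvu, huv1, hvu1]
    simp only [P3']
    module
  refine ⟨?_, E2, E3⟩
  rw [mul_smul_comm, smul_mul_assoc, ← smul_sub, E1, smul_comm]
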